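/- Let n ≥ 1, α > 0, μ > 0, L ≥ 0, and let f : ℝⁿ → ℝ be L-smooth. Then for every p ∈ ℝⁿ, ‖∫ ((1/(2μ)) ∫_{−μ}^{μ} ⟨∇f(p + t•v), v⟩ dt) • v dσ_α(v) − (α²/n) • ∇f(p)‖ ≤ L·α³·μ/2, where the outer integral is over v drawn from the uniform probability measure σ_α on the origin-centered sphere of radius α. -/

import Mathlib

open MeasureTheory

variable {n : ℕ}

noncomputable def flipIso (j : Fin n) : EuclideanSpace ℝ (Fin n) ≃ₗᵢ[ℝ] EuclideanSpace ℝ (Fin n) :=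
  LinearIsometryEquiv.piLpCongrRight 2
    (fun k => if k = j then LinearIsometryEquiv.neg ℝ else LinearIsometryEquiv.refl ℝ ℝ)

lemma flipIso_apply (j k : Fin n) (v : EuclideanSpace ℝ (Fin n)) :
    flipIso j v k = if k = j then -v k else v k := by
  show (if k = j then LinearIsometryEquiv.neg ℝ else LinearIsometryEquiv.refl ℝ ℝ) (v k)
      = if k = j then -v k else v k
  split <;> simp

noncomputable def swapIso (i j : Fin n) : EuclideanSpace ℝ (Fin n) ≃ₗᵢ[ℝ] EuclideanSpace ℝ (Fin n) :=
  LinearIsometryEquiv.piLpCongrLeft 2 ℝ ℝ (Equiv.swap i j)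

lemma swapIso_apply (i j k : Fin n) (v : EuclideanSpace ℝ (Fin n)) :
    swapIso i j v k = v (Equiv.swap i j k) := by
  show v ((Equiv.swap i j).symm k) = _
  simp [Equiv.symm_swap]

lemma abs_coord_le (v : EuclideanSpace ℝ (Fin n)) (i : Fin n) : |v i| ≤ ‖v‖ := by
  rw [EuclideanSpace.norm_eq, ← Real.sqrt_sq_eq_abs]
  apply Real.sqrt_le_sqrt
  calc v i ^ 2 = ‖v i‖ ^ 2 := by rw [Real.norm_eq_abs, sq_abs]
    _ ≤ ∑ j, ‖v j‖ ^ 2 :=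
      Finset.single_le_sum (f := fun j => ‖v j‖ ^ 2) (fun j _ => sq_nonneg _) (Finset.mem_univ i)

variable {α : ℝ} {σ : Measure (EuclideanSpace ℝ (Fin n))} [IsProbabilityMeasure σ]

lemma integrable_coord_mul (hs : ∀ᵐ v ∂σ, ‖v‖ = α) (i j : Fin n) :
    Integrable (fun v => v i * v j) σ := by
  apply Integrable.mono' (integrable_const (α ^ 2))
  · exact (((continuous_apply i).comp (PiLp.continuous_ofLp 2 _)).mul
      ((continuous_apply j).comp (PiLp.continuous_ofLp 2 _))).aestronglyMeasurable
  · filter_upwards [hs] with v hv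
    rw [Real.norm_eq_abs, abs_mul, sq]
    exact mul_le_mul ((abs_coord_le v i).trans hv.le) ((abs_coord_le v j).trans hv.le)
      (abs_nonneg _) (by rw [← hv]; positivity)

lemma moment_offdiag
    (hσ_rot : ∀ R : EuclideanSpace ℝ (Fin n) ≃ₗᵢ[ℝ] EuclideanSpace ℝ (Fin n),
      Measure.map R σ = σ) {i j : Fin n} (hij : i ≠ j) :
    ∫ v, v i * v j ∂σ = 0 := by
  have hcont : Continuous (fun v : EuclideanSpace ℝ (Fin n) => v i * v j) :=
    ((continuous_apply i).comp (PiLp.continuous_ofLp 2 _)).mul ((continuous_apply j).comp (PiLp.continuous_ofLp 2 _))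
  have h1 : ∫ v, v i * v j ∂σ = ∫ v, (flipIso j v) i * (flipIso j v) j ∂σ := by
    conv_lhs => rw [← hσ_rot (flipIso j)]
    exact integral_map (flipIso j).continuous.measurable.aemeasurable
      hcont.aestronglyMeasurable
  have h2 : ∀ v : EuclideanSpace ℝ (Fin n),
      (flipIso j v) i * (flipIso j v) j = -(v i * v j) := by
    intro v
    rw [flipIso_apply, flipIso_apply, if_neg hij, if_pos rfl]
    ring
  simp only [h2, integral_neg] at h1
  linarith

lemma moment_diag_eq
    (hσ_rot : ∀ R : EuclideanSpace ℝ (Fin n) ≃ₗᵢ[ℝ] EuclideanSpace ℝ (Fin n),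
      Measure.map R σ = σ) (i j : Fin n) :
    ∫ v, v i * v i ∂σ = ∫ v, v j * v j ∂σ := by
  have hcont : Continuous (fun v : EuclideanSpace ℝ (Fin n) => v i * v i) :=
    ((continuous_apply i).comp (PiLp.continuous_ofLp 2 _)).mul ((continuous_apply i).comp (PiLp.continuous_ofLp 2 _))
  have h1 : ∫ v, v i * v i ∂σ = ∫ v, (swapIso i j v) i * (swapIso i j v) i ∂σ := by
    conv_lhs => rw [← hσ_rot (swapIso i j)]
    exact integral_map (swapIso i j).continuous.measurable.aemeasurable
      hcont.aestronglyMeasurable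
  simp only [swapIso_apply] at h1
  rw [show Equiv.swap i j i = j from Equiv.swap_apply_left i j] at h1
  exact h1

lemma moment_diag (hn : 1 ≤ n) (hs : ∀ᵐ v ∂σ, ‖v‖ = α)
    (hσ_rot : ∀ R : EuclideanSpace ℝ (Fin n) ≃ₗᵢ[ℝ] EuclideanSpace ℝ (Fin n),
      Measure.map R σ = σ) (i : Fin n) :
    ∫ v, v i * v i ∂σ = α ^ 2 / n := by
  have hsum : ∑ j, ∫ v, v j * v j ∂σ = α ^ 2 := by
    rw [← integral_finset_sum _ (fun j _ => integrable_coord_mul hs j j)]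
    rw [integral_congr_ae (g := fun _ => α ^ 2), integral_const]
    · simp
    · filter_upwards [hs] with v hv
      have := EuclideanSpace.norm_eq v
      rw [hv] at this
      have h2 : α ^ 2 = ∑ j, ‖v j‖ ^ 2 := by
        rw [this, Real.sq_sqrt (Finset.sum_nonneg fun j _ => sq_nonneg _)]
      rw [h2]
      exact Finset.sum_congr rfl fun j _ => by rw [Real.norm_eq_abs, sq_abs, sq]
  have hall : ∀ j, ∫ v, v j * v j ∂σ = ∫ v, v i * v i ∂σ := fun j => moment_diag_eq hσ_rot j i
  rw [Finset.sum_congr rfl (fun j _ => hall j), Finset.sum_const, Finset.card_univ,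
    Fintype.card_fin, nsmul_eq_mul] at hsum
  rw [eq_div_iff (Nat.cast_ne_zero.mpr (by omega))]
  linarith [hsum]

lemma key_integral (hn : 1 ≤ n) (hs : ∀ᵐ v ∂σ, ‖v‖ = α)
    (hσ_rot : ∀ R : EuclideanSpace ℝ (Fin n) ≃ₗᵢ[ℝ] EuclideanSpace ℝ (Fin n),
      Measure.map R σ = σ) (w : EuclideanSpace ℝ (Fin n)) :
    ∫ v, (inner ℝ w v : ℝ) • v ∂σ = (α ^ 2 / n) • w := by
  have hinner : ∀ v : EuclideanSpace ℝ (Fin n), (inner ℝ w v : ℝ) = ∑ i, w i * v i := by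
    intro v
    simp [PiLp.inner_apply, RCLike.inner_apply, conj_trivial, mul_comm]
  have hcont : Continuous (fun v : EuclideanSpace ℝ (Fin n) => (inner ℝ w v : ℝ) • v) :=
    (continuous_const.inner (𝕜 := ℝ) continuous_id).smul continuous_id
  have hF : Integrable (fun v : EuclideanSpace ℝ (Fin n) => (inner ℝ w v : ℝ) • v) σ := by
    apply Integrable.mono' (integrable_const (‖w‖ * α * α)) hcont.aestronglyMeasurable
    filter_upwards [hs] with v hv
    rw [norm_smul, Real.norm_eq_abs, hv]
    have h1 : |(inner ℝ w v : ℝ)| ≤ ‖w‖ * α := by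
      have := abs_real_inner_le_norm w v
      rwa [hv] at this
    have hα' : (0:ℝ) ≤ α := by rw [← hv]; positivity
    nlinarith
  refine PiLp.ext ?_
  intro j
  have hproj := (EuclideanSpace.proj (𝕜 := ℝ) j).integral_comp_comm hF
  have hproj' : (∫ v, (inner ℝ w v : ℝ) • v ∂σ) j = ∫ v, (inner ℝ w v : ℝ) * v j ∂σ := by
    rw [show (∫ v, (inner ℝ w v : ℝ) • v ∂σ) j
        = EuclideanSpace.proj (𝕜 := ℝ) j (∫ v, (inner ℝ w v : ℝ) • v ∂σ) from rfl, ← hproj]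
    simp
  rw [hproj']
  have hint : ∀ v : EuclideanSpace ℝ (Fin n), (inner ℝ w v : ℝ) * v j
      = ∑ i, w i * (v i * v j) := by
    intro v
    rw [hinner, Finset.sum_mul]
    exact Finset.sum_congr rfl fun i _ => by ring
  simp only [hint]
  rw [integral_finset_sum _ (fun i _ => (integrable_coord_mul hs i j).const_mul _)]
  simp only [integral_const_mul]
  rw [Finset.sum_eq_single j]
  · rw [show (∫ a, a j * a j ∂σ) = ∫ v, v j * v j ∂σ from rfl, moment_diag hn hs hσ_rot j]
    simp [mul_comm]
  · intro i _ hij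
    rw [show (∫ a, a i * a j ∂σ) = ∫ v, v i * v j ∂σ from rfl, moment_offdiag hσ_rot hij,
      mul_zero]
  · intro h
    exact absurd (Finset.mem_univ j) h

lemma integrable_inner_smul (hs : ∀ᵐ v ∂σ, ‖v‖ = α) (w : EuclideanSpace ℝ (Fin n)) :
    Integrable (fun v : EuclideanSpace ℝ (Fin n) => (inner ℝ w v : ℝ) • v) σ := by
  apply Integrable.mono' (integrable_const (‖w‖ * α * α))
    ((continuous_const.inner (𝕜 := ℝ) continuous_id).smul continuous_id).aestronglyMeasurable
  filter_upwards [hs] with v hv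
  simp only [id_eq, Pi.smul_apply']
  rw [norm_smul, Real.norm_eq_abs, hv]
  have h1 : |(inner ℝ w v : ℝ)| ≤ ‖w‖ * α := by
    have := abs_real_inner_le_norm w v
    rwa [hv] at this
  have hα' : (0:ℝ) ≤ α := by rw [← hv]; positivity
  nlinarith

lemma abs_integral : ∀ μ : ℝ, 0 < μ → (∫ t in (-μ)..μ, |t|) = μ ^ 2 := by
  intro μ hμ
  have hc : Continuous (fun t : ℝ => |t|) := continuous_abs
  have h1 : (∫ t in (-μ)..(0:ℝ), |t|) + (∫ t in (0:ℝ)..μ, |t|) = ∫ t in (-μ)..μ, |t| :=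
    intervalIntegral.integral_add_adjacent_intervals
      (hc.intervalIntegrable _ _) (hc.intervalIntegrable _ _)
  have h2 : (∫ t in (0:ℝ)..μ, |t|) = μ ^ 2 / 2 := by
    rw [intervalIntegral.integral_congr (g := fun t => t) ?_, integral_id]
    · ring
    · intro t ht
      rw [Set.uIcc_of_le hμ.le] at ht
      exact abs_of_nonneg ht.1
  have h3 : (∫ t in (-μ)..(0:ℝ), |t|) = μ ^ 2 / 2 := by
    rw [intervalIntegral.integral_congr (g := fun t => -t) ?_]
    · rw [intervalIntegral.integral_neg, integral_id]
      ring
    · intro t ht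
      rw [Set.uIcc_of_le (by linarith : -μ ≤ (0:ℝ))] at ht
      exact abs_of_nonpos ht.2
  rw [← h1, h2, h3]
  ring

/-- For an `L`-smooth `f : ℝⁿ → ℝ`, averaging the smoothed directional
derivatives against `v ∼ σ` (uniform on the sphere of radius `α`) recovers `(α²/n) • ∇f(p)`
up to an error of `Lα³μ/2` in norm. -/
theorem gw_smoothed_gradient_error
    (n : ℕ) (hn : 1 ≤ n) (α μ L : ℝ) (hα : 0 < α) (hμ : 0 < μ) (hL : 0 ≤ L)
    (σ : Measure (EuclideanSpace ℝ (Fin n))) [IsProbabilityMeasure σ]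
    (hσ_sphere : ∀ᵐ v ∂σ, ‖v‖ = α)
    (hσ_rot : ∀ R : EuclideanSpace ℝ (Fin n) ≃ₗᵢ[ℝ] EuclideanSpace ℝ (Fin n),
      Measure.map R σ = σ)
    (f : EuclideanSpace ℝ (Fin n) → ℝ)
    (hf_diff : Differentiable ℝ f)
    (hf_smooth : ∀ x y, ‖gradient f x - gradient f y‖ ≤ L * ‖x - y‖)
    (p : EuclideanSpace ℝ (Fin n)) :
    ‖(∫ v, ((1 / (2 * μ)) * ∫ t in (-μ)..μ, (inner ℝ (gradient f (p + t • v)) v : ℝ)) • v ∂σ) -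
        (α ^ 2 / n) • gradient f p‖
      ≤ L * α ^ 3 * μ / 2 := by
  set w := gradient f p with hw
  have hgc : Continuous (gradient f) := by
    refine (LipschitzWith.of_dist_le_mul (K := Real.toNNReal L) ?_).continuous
    intro x y
    rw [dist_eq_norm, dist_eq_norm]
    calc ‖gradient f x - gradient f y‖ ≤ L * ‖x - y‖ := hf_smooth x y
      _ = (Real.toNNReal L : ℝ) * ‖x - y‖ := by rw [Real.coe_toNNReal L hL]
  set G : EuclideanSpace ℝ (Fin n) → ℝ :=
    fun v => (1 / (2 * μ)) * ∫ t in (-μ)..μ, (inner ℝ (gradient f (p + t • v)) v : ℝ) with hG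
  have hGcont : Continuous G := by
    apply continuous_const.mul
    apply intervalIntegral.continuous_parametric_intervalIntegral_of_continuous'
    exact Continuous.inner
      (hgc.comp (continuous_const.add (continuous_snd.smul continuous_fst)))
      continuous_fst
  -- pointwise bound on the sphere
  have hbound : ∀ v : EuclideanSpace ℝ (Fin n), ‖v‖ = α →
      |G v - (inner ℝ w v : ℝ)| ≤ L * α ^ 2 * μ / 2 := by
    intro v hv
    have hcont1 : Continuous (fun t : ℝ => (inner ℝ (gradient f (p + t • v)) v : ℝ)) :=
      Continuous.inner (hgc.comp (continuous_const.add (continuous_id.smul continuous_const)))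
        continuous_const
    have hInt : IntervalIntegrable (fun t : ℝ => (inner ℝ (gradient f (p + t • v)) v : ℝ))
        volume (-μ) μ := hcont1.intervalIntegrable _ _
    have hsub : (∫ t in (-μ)..μ, ((inner ℝ (gradient f (p + t • v)) v : ℝ) - inner ℝ w v))
        = (∫ t in (-μ)..μ, (inner ℝ (gradient f (p + t • v)) v : ℝ)) - 2 * μ * inner ℝ w v := by
      rw [intervalIntegral.integral_sub hInt (intervalIntegrable_const)]
      rw [intervalIntegral.integral_const]
      rw [smul_eq_mul]
      ring
    have hGdiff : G v - (inner ℝ w v : ℝ)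
        = (1 / (2 * μ)) * ∫ t in (-μ)..μ, ((inner ℝ (gradient f (p + t • v)) v : ℝ) - inner ℝ w v) := by
      rw [hsub, hG]
      field_simp
    have hptwise : ∀ t ∈ Set.uIcc (-μ) μ,
        |(inner ℝ (gradient f (p + t • v)) v : ℝ) - inner ℝ w v| ≤ L * α ^ 2 * |t| := by
      intro t _
      rw [← inner_sub_left]
      calc |(inner ℝ (gradient f (p + t • v) - w) v : ℝ)|
          ≤ ‖gradient f (p + t • v) - w‖ * ‖v‖ := abs_real_inner_le_norm _ _
        _ ≤ (L * ‖p + t • v - p‖) * α := by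
            rw [hv]
            exact mul_le_mul_of_nonneg_right (hf_smooth _ _) hα.le
        _ = L * α ^ 2 * |t| := by
            rw [show p + t • v - p = t • v by abel, norm_smul, Real.norm_eq_abs, hv]
            ring
    have habs : |∫ t in (-μ)..μ, ((inner ℝ (gradient f (p + t • v)) v : ℝ) - inner ℝ w v)|
        ≤ L * α ^ 2 * μ ^ 2 := by
      calc |∫ t in (-μ)..μ, ((inner ℝ (gradient f (p + t • v)) v : ℝ) - inner ℝ w v)|
          ≤ ∫ t in (-μ)..μ, |(inner ℝ (gradient f (p + t • v)) v : ℝ) - inner ℝ w v| := by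
            apply intervalIntegral.abs_integral_le_integral_abs (by linarith)
        _ ≤ ∫ t in (-μ)..μ, L * α ^ 2 * |t| := by
            apply intervalIntegral.integral_mono_on (by linarith)
              ((hcont1.sub continuous_const).abs.intervalIntegrable _ _)
              ((continuous_const.mul continuous_abs).intervalIntegrable _ _)
            intro t ht
            exact hptwise t (by rwa [Set.uIcc_of_le (by linarith : -μ ≤ μ)])
        _ = L * α ^ 2 * μ ^ 2 := by
            rw [intervalIntegral.integral_const_mul, abs_integral μ hμ]
    rw [hGdiff, abs_mul, abs_of_pos (by positivity : (0:ℝ) < 1 / (2 * μ))]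
    calc (1 / (2 * μ)) * |∫ t in (-μ)..μ, ((inner ℝ (gradient f (p + t • v)) v : ℝ) - inner ℝ w v)|
        ≤ (1 / (2 * μ)) * (L * α ^ 2 * μ ^ 2) := by
          exact mul_le_mul_of_nonneg_left habs (by positivity)
      _ = L * α ^ 2 * μ / 2 := by field_simp
  -- integrability of the difference
  have hdiffCont : Continuous (fun v : EuclideanSpace ℝ (Fin n) =>
      (G v - (inner ℝ w v : ℝ)) • v) :=
    ((hGcont.sub (continuous_const.inner continuous_id)).smul continuous_id)
  have hdiffInt : Integrable (fun v : EuclideanSpace ℝ (Fin n) =>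
      (G v - (inner ℝ w v : ℝ)) • v) σ := by
    apply Integrable.mono' (integrable_const (L * α ^ 3 * μ / 2)) hdiffCont.aestronglyMeasurable
    filter_upwards [hσ_sphere] with v hv
    rw [norm_smul, Real.norm_eq_abs, hv]
    calc |G v - (inner ℝ w v : ℝ)| * α ≤ (L * α ^ 2 * μ / 2) * α :=
          mul_le_mul_of_nonneg_right (hbound v hv) hα.le
      _ = L * α ^ 3 * μ / 2 := by ring
  have hinnerInt := integrable_inner_smul hσ_sphere w
  have hGInt : Integrable (fun v : EuclideanSpace ℝ (Fin n) => G v • v) σ := by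
    have := hdiffInt.add hinnerInt
    convert this using 1
    · rfl
    funext v
    simp only [Pi.add_apply]
    rw [sub_smul]
    abel
  rw [← key_integral hn hσ_sphere hσ_rot w, ← integral_sub hGInt hinnerInt]
  have heq : (fun v : EuclideanSpace ℝ (Fin n) => G v • v - (inner ℝ w v : ℝ) • v)
      = fun v => (G v - (inner ℝ w v : ℝ)) • v := by
    funext v
    rw [sub_smul]
  rw [heq]
  calc ‖∫ v, (G v - (inner ℝ w v : ℝ)) • v ∂σ‖
      ≤ ∫ v, ‖(G v - (inner ℝ w v : ℝ)) • v‖ ∂σ := norm_integral_le_integral_norm _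
    _ ≤ ∫ _v, L * α ^ 3 * μ / 2 ∂σ := by
        apply integral_mono_of_nonneg (Filter.Eventually.of_forall fun v => norm_nonneg _)
          (integrable_const _)
        filter_upwards [hσ_sphere] with v hv
        rw [norm_smul, Real.norm_eq_abs, hv]
        calc |G v - (inner ℝ w v : ℝ)| * α ≤ (L * α ^ 2 * μ / 2) * α :=
              mul_le_mul_of_nonneg_right (hbound v hv) hα.le
          _ = L * α ^ 3 * μ / 2 := by ring
    _ = L * α ^ 3 * μ / 2 := by
        rw [integral_const]
        simp
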